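/- Let u : ℝ × ℝ → [0,1] be uniformly continuous, and let X : ℝ → ℝ be a function such that u(t, X(t) + x) → 1 as x → -∞ and u(t, X(t) + x) → 0 as x → +∞, uniformly in t ∈ ℝ. Then for every τ ≥ 0, sup { |X(t) - X(s)| : |t - s| ≤ τ } < +∞. -/
import Mathlib


theorem stmt7 (u : ℝ × ℝ → ℝ) (hrange : ∀ p, u p ∈ Set.Icc (0:ℝ) 1)
    (hcont : UniformContinuous u) (X : ℝ → ℝ)
    (hfront : ∀ ε > (0:ℝ), ∃ A, 0 ≤ A ∧
      ∀ t x : ℝ, (x ≤ -A → 1 - ε ≤ u (t, X t + x)) ∧ (A ≤ x → u (t, X t + x) ≤ ε)) :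
    ∀ τ : ℝ, 0 ≤ τ → ∃ B : ℝ, ∀ t s : ℝ, |t - s| ≤ τ → |X t - X s| ≤ B := by
  obtain ⟨A, hA0, hA⟩ := hfront (1/4) (by norm_num)
  obtain ⟨δ, hδ0, hδ⟩ := Metric.uniformContinuous_iff.mp hcont (1/3) (by norm_num)
  set d := δ/2 with hd
  have hd0 : 0 < d := by positivity
  -- one-sided key estimate
  have half : ∀ t s : ℝ, |t - s| ≤ d → X t - X s ≤ 2*A := by
    intro t s hts
    by_contra h
    push_neg at h
    set y := X s + A with hy
    have h1 : u (s, y) ≤ 1/4 := (hA s A).2 le_rfl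
    have h2 : (1:ℝ) - 1/4 ≤ u (t, y) := by
      have : y = X t + (y - X t) := by ring
      rw [this]
      exact (hA t (y - X t)).1 (by simp only [hy]; linarith)
    have hdist : dist ((t, y) : ℝ × ℝ) (s, y) < δ := by
      rw [Prod.dist_eq]
      simp only [dist_self]
      rw [Real.dist_eq]
      calc max |t - s| 0 = |t - s| := max_eq_left (abs_nonneg _)
        _ ≤ d := hts
        _ < δ := by rw [hd]; linarith
    have := hδ hdist
    rw [Real.dist_eq] at this
    have := abs_lt.mp this
    linarith [this.1, this.2]
  have key : ∀ t s : ℝ, |t - s| ≤ d → |X t - X s| ≤ 2*A := by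
    intro t s hts
    refine abs_le.mpr ⟨?_, half t s hts⟩
    have := half s t (by rwa [abs_sub_comm]); linarith
  -- chain estimate
  have chain : ∀ n : ℕ, ∀ t s : ℝ, t ≤ s → s - t ≤ n * d → |X t - X s| ≤ n * (2*A) := by
    intro n
    induction n with
    | zero =>
      intro t s hts h
      simp only [Nat.cast_zero, zero_mul] at h ⊢
      have : t = s := le_antisymm hts (by linarith)
      simp [this]
    | succ n ih =>
      intro t s hts h
      set r := min (t + d) s with hr
      have hr1 : t ≤ r := le_min (by linarith) hts
      have hr2 : r ≤ s := min_le_right _ _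
      have hr3 : |t - r| ≤ d := by
        rw [abs_sub_comm, abs_of_nonneg (by linarith)]
        have : r ≤ t + d := min_le_left _ _
        linarith
      have hr4 : s - r ≤ n * d := by
        rcases le_or_gt s (t + d) with hc | hc
        · have : r = s := min_eq_right hc
          rw [this]; simp; positivity
        · have : r = t + d := min_eq_left hc.le
          rw [this]
          push_cast at h ⊢
          linarith
      calc |X t - X s| ≤ |X t - X r| + |X r - X s| := abs_sub_le _ _ _
        _ ≤ 2*A + n * (2*A) := add_le_add (key t r hr3) (ih r s hr2 hr4)
        _ = (n+1 : ℕ) * (2*A) := by push_cast; ring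
  intro τ hτ
  refine ⟨(⌈τ/d⌉₊ : ℕ) * (2*A), fun t s hts => ?_⟩
  have hτn : τ ≤ (⌈τ/d⌉₊ : ℕ) * d := by
    have := Nat.le_ceil (τ/d)
    rw [div_le_iff₀ hd0] at this
    linarith
  rcases le_total t s with h | h
  · exact chain _ t s h (by rw [abs_sub_comm, abs_of_nonneg (by linarith)] at hts; linarith)
  · rw [abs_sub_comm]
    exact chain _ s t h (by rw [abs_of_nonneg (by linarith)] at hts; linarith)
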